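/- Let H and G be real Hilbert spaces, let T : H → G be a bounded linear operator with Hilbert adjoint T* : G → H, let u ∈ H, and define ℓ(h) = ⟨h, u⟩ for h ∈ H. Then the following are equivalent: (i) there exists a constant C ≥ 0 such that |ℓ(h)| ≤ C‖Th‖ for all h ∈ H; (ii) ℓ vanishes on the kernel of T and there exists q ∈ G with T*q = u. Moreover, if q ∈ G satisfies T*q = u, then |ℓ(h)| ≤ ‖q‖·‖Th‖ for all h ∈ H, and among all solutions of T*q = u there is one of minimum norm, which lies in the orthogonal complement of the kernel of T*. -/

import Mathlib

open scoped RealInnerProductSpace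

lemma aux_exists_q
    {H G : Type*} [NormedAddCommGroup H] [InnerProductSpace ℝ H] [CompleteSpace H]
    [NormedAddCommGroup G] [InnerProductSpace ℝ G] [CompleteSpace G]
    (T : H →L[ℝ] G) (u : H) (C : ℝ)
    (hb : ∀ h : H, |⟪h, u⟫| ≤ C * ‖T h‖) :
    ∃ q : G, ContinuousLinearMap.adjoint T q = u := by
  set S : H →ₗ[ℝ] ℝ :=
    { toFun := fun h => ⟪h, u⟫
      map_add' := fun x y => inner_add_left x y u
      map_smul' := fun c x => real_inner_smul_left x u c } with hSdef
  have hle : LinearMap.ker (T : H →ₗ[ℝ] G) ≤ LinearMap.ker S := by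
    intro h hh
    have hT : T h = 0 := hh
    have := hb h
    rw [hT, norm_zero, mul_zero] at this
    exact abs_nonpos_iff.mp this
  set e := LinearMap.quotKerEquivRange (T : H →ₗ[ℝ] G) with he
  set f : LinearMap.range (T : H →ₗ[ℝ] G) →ₗ[ℝ] ℝ :=
    (Submodule.liftQ _ S hle) ∘ₗ e.symm.toLinearMap with hf
  have hfval : ∀ (h : H) (hx : (T : H →ₗ[ℝ] G) h ∈ LinearMap.range (T : H →ₗ[ℝ] G)),
      f ⟨(T : H →ₗ[ℝ] G) h, hx⟩ = ⟪h, u⟫ := by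
    intro h hx
    have : e.symm ⟨(T : H →ₗ[ℝ] G) h, hx⟩ = Submodule.Quotient.mk h := by
      rw [LinearEquiv.symm_apply_eq]
      exact Subtype.ext (LinearMap.quotKerEquivRange_apply_mk _ h)
    rw [hf]
    simp only [LinearMap.comp_apply, this, LinearEquiv.coe_coe, Submodule.liftQ_apply]
    rfl
  have hbound : ∀ x : LinearMap.range (T : H →ₗ[ℝ] G), ‖f x‖ ≤ C * ‖x‖ := by
    rintro ⟨x, hx⟩
    obtain ⟨h, rfl⟩ := hx
    rw [hfval h ⟨h, rfl⟩]
    simpa using hb h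
  set fc : LinearMap.range (T : H →ₗ[ℝ] G) →L[ℝ] ℝ := f.mkContinuous C hbound with hfc
  obtain ⟨g, hg, _⟩ := exists_extension_norm_eq (LinearMap.range (T : H →ₗ[ℝ] G)) fc
  refine ⟨(InnerProductSpace.toDual ℝ G).symm g, ?_⟩
  apply ext_inner_left ℝ
  intro h
  rw [ContinuousLinearMap.adjoint_inner_right]
  rw [real_inner_comm, InnerProductSpace.toDual_symm_apply]
  have := hg ⟨T h, ⟨h, rfl⟩⟩
  rw [this]
  have : fc ⟨T h, ⟨h, rfl⟩⟩ = f ⟨T h, ⟨h, rfl⟩⟩ := rfl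
  rw [this]
  exact hfval h ⟨h, rfl⟩

/-- **Riesz/adjoint-range equivalence.**
Let `H` and `G` be real Hilbert spaces, `T : H → G` a bounded linear operator with
Hilbert adjoint `T*`, `u ∈ H`, and `ℓ h = ⟪h, u⟫`.  Then:
(i) `∃ C ≥ 0, |ℓ h| ≤ C ‖T h‖` for all `h` iff
(ii) `ℓ` vanishes on `ker T` and `∃ q, T* q = u`.
Moreover any solution `q` of `T* q = u` gives the bound `|ℓ h| ≤ ‖q‖ ‖T h‖`, and among
all solutions there is one of minimum norm lying in `(ker T*)ᗮ`. -/
theorem riesz_adjoint_range_equivalence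
    {H G : Type*} [NormedAddCommGroup H] [InnerProductSpace ℝ H] [CompleteSpace H]
    [NormedAddCommGroup G] [InnerProductSpace ℝ G] [CompleteSpace G]
    (T : H →L[ℝ] G) (u : H) :
    ((∃ C : ℝ, 0 ≤ C ∧ ∀ h : H, |⟪h, u⟫| ≤ C * ‖T h‖) ↔
      ((∀ h ∈ LinearMap.ker (T : H →ₗ[ℝ] G), ⟪h, u⟫ = (0 : ℝ)) ∧
        ∃ q : G, ContinuousLinearMap.adjoint T q = u)) ∧
    (∀ q : G, ContinuousLinearMap.adjoint T q = u →
      ∀ h : H, |⟪h, u⟫| ≤ ‖q‖ * ‖T h‖) ∧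
    ((∃ q : G, ContinuousLinearMap.adjoint T q = u) →
      ∃ q₀ : G, ContinuousLinearMap.adjoint T q₀ = u ∧
        (∀ q : G, ContinuousLinearMap.adjoint T q = u → ‖q₀‖ ≤ ‖q‖) ∧
        q₀ ∈ (LinearMap.ker ((ContinuousLinearMap.adjoint T : G →L[ℝ] H) : G →ₗ[ℝ] H))ᗮ) := by
  have hbd : ∀ q : G, ContinuousLinearMap.adjoint T q = u →
      ∀ h : H, |⟪h, u⟫| ≤ ‖q‖ * ‖T h‖ := by
    intro q hq h
    rw [← hq, ContinuousLinearMap.adjoint_inner_right]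
    calc |⟪T h, q⟫| ≤ ‖T h‖ * ‖q‖ := abs_real_inner_le_norm _ _
      _ = ‖q‖ * ‖T h‖ := mul_comm _ _
  refine ⟨⟨?_, ?_⟩, hbd, ?_⟩
  · rintro ⟨C, hC, hb⟩
    refine ⟨?_, aux_exists_q T u C hb⟩
    intro h hh
    have hT : T h = 0 := hh
    have := hb h
    rw [hT, norm_zero, mul_zero] at this
    exact abs_nonpos_iff.mp this
  · rintro ⟨-, q, hq⟩
    exact ⟨‖q‖, norm_nonneg q, hbd q hq⟩
  · rintro ⟨q, hq⟩
    set K := LinearMap.ker ((ContinuousLinearMap.adjoint T : G →L[ℝ] H) : G →ₗ[ℝ] H) with hK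
    haveI : CompleteSpace K := (ContinuousLinearMap.isClosed_ker _).completeSpace_coe
    set k : G := (K.orthogonalProjection q : G) with hk
    have hkmem : ContinuousLinearMap.adjoint T k = 0 := (K.orthogonalProjection q).2
    refine ⟨q - k, ?_, ?_, K.sub_starProjection_mem_orthogonal q⟩
    · rw [map_sub, hq, hkmem, sub_zero]
    · intro q' hq'
      have hmem : q' - (q - k) ∈ K := by
        rw [LinearMap.mem_ker, ContinuousLinearMap.coe_coe, map_sub, hq']
        rw [map_sub, hq, hkmem, sub_zero, sub_self]
      have horth : ⟪q - k, q' - (q - k)⟫ = 0 := by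
        rw [real_inner_comm]
        exact (K.sub_starProjection_mem_orthogonal q) _ hmem
      have hsq : ‖q - k‖ ^ 2 ≤ ‖q'‖ ^ 2 := by
        have : ‖q'‖ ^ 2 = ‖q - k‖ ^ 2 + ‖q' - (q - k)‖ ^ 2 := by
          have := norm_add_sq_real (q - k) (q' - (q - k))
          simp only [add_sub_cancel] at this
          rw [this, horth, mul_zero, add_zero]
        nlinarith [sq_nonneg ‖q' - (q - k)‖]
      have := Real.sqrt_le_sqrt hsq
      rwa [Real.sqrt_sq (norm_nonneg _), Real.sqrt_sq (norm_nonneg _)] at this
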